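/- Consider the independent-set selection problem for external adjacencies between two regions: given an outerplanar internal-adjacency graph on one side with vertex weights equal to external-adjacency degrees, first compute an exact maximum-weight independent set I on that side, then compute an exact maximum-weight independent set on the other side with respect to only the external adjacencies into I. The number of external adjacencies preserved by this procedure is at least one third of the maximum number preservable by any pair of independent sets; i.e., the procedure is a 1/3-approximation. -/

import Mathlib

open scoped BigOperators

/-- A graph is outerplanar iff it can be drawn with all vertices placed (injectively) on the
unit circle and edges drawn as pairwise non-crossing chords: two chords of distinct edges
never meet in a point interior to both. -/
def IsOuterplanar {V : Type} (G : SimpleGraph V) : Prop :=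
  ∃ pos : V → EuclideanSpace ℝ (Fin 2),
    Function.Injective pos ∧ (∀ v : V, ‖pos v‖ = 1) ∧
    ∀ a b c d : V, G.Adj a b → G.Adj c d → ({a, b} : Set V) ≠ {c, d} →
      openSegment ℝ (pos a) (pos b) ∩ openSegment ℝ (pos c) (pos d) = ∅

/-- A maximal outerplanar graph: outerplanar, and no edge can be added while keeping the
graph outerplanar. -/
def IsMaximalOuterplanar {V : Type} (G : SimpleGraph V) : Prop :=
  IsOuterplanar G ∧ ∀ H : SimpleGraph V, G ≤ H → G ≠ H → ¬ IsOuterplanar H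

/-- An independent set of a graph. -/
def IsIndepSet {V : Type} (G : SimpleGraph V) (I : Finset V) : Prop :=
  ∀ i ∈ I, ∀ j ∈ I, ¬ G.Adj i j

variable {A B : Type} [Fintype A] [Fintype B] [DecidableEq A] [DecidableEq B]

/-- The number of external adjacency edges of `E` preserved by the pair of selections
`(IA, IB)`. -/
def preservedCount (E : Finset (A × B)) (IA : Finset A) (IB : Finset B) : ℕ :=
  (E.filter (fun e => e.1 ∈ IA ∧ e.2 ∈ IB)).card

section ThirdApproxAux
open Real

lemma sin_sum_id (u w : ℝ) : Real.sin u + Real.sin w - Real.sin (u+w)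
    = 4 * Real.sin (u/2) * Real.sin (w/2) * Real.sin (u/2 + w/2) := by
  have h : ∀ a b : ℝ, Real.sin (2*a) + Real.sin (2*b) - Real.sin (2*a + 2*b)
      = 4 * Real.sin a * Real.sin b * Real.sin (a+b) := by
    intro a b
    rw [show 2*a+2*b = 2*(a+b) by ring, Real.sin_two_mul, Real.sin_two_mul, Real.sin_two_mul,
      Real.sin_add, Real.cos_add]
    linear_combination (-2*Real.sin a*Real.cos a) * Real.sin_sq_add_cos_sq b
      + (-2*Real.sin b*Real.cos b) * Real.sin_sq_add_cos_sq a
  have := h (u/2) (w/2)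
  rw [show 2*(u/2) = u by ring, show 2*(w/2) = w by ring] at this
  linarith [this]

lemma sin_sum_pos {u w : ℝ} (hu : 0 < u) (hw : 0 < w) (h : u + w < 2*π) :
    0 < Real.sin u + Real.sin w - Real.sin (u+w) := by
  rw [sin_sum_id]
  have h1 : 0 < Real.sin (u/2) := Real.sin_pos_of_pos_of_lt_pi (by linarith) (by linarith)
  have h2 : 0 < Real.sin (w/2) := Real.sin_pos_of_pos_of_lt_pi (by linarith) (by linarith)
  have h3 : 0 < Real.sin (u/2 + w/2) := Real.sin_pos_of_pos_of_lt_pi (by linarith) (by linarith)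
  positivity

lemma cos_lt_one' {x : ℝ} (hx : 0 < x) (hx2 : x < 2*π) : Real.cos x < 1 := by
  have h1 : 0 < Real.sin (x/2) := Real.sin_pos_of_pos_of_lt_pi (by linarith) (by linarith)
  have h2 : Real.cos (2*(x/2)) = 2 * Real.cos (x/2)^2 - 1 := Real.cos_two_mul _
  rw [show 2*(x/2) = x by ring] at h2
  nlinarith [Real.sin_sq_add_cos_sq (x/2)]

private lemma aux_q {s X : ℝ} (h0 : 0 < s) (h1 : s < 1) (hX : X < 1) :
    s^2 + (1-s)^2 + 2*s*(1-s)*X < 1 := by nlinarith [mul_pos h0 (by linarith : (0:ℝ) < 1 - s)]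

private lemma aux_k {k N : ℝ} (hN : 0 < N) (h : 1 + (k^2-k)*N < 1) : 0 < k ∧ k < 1 := by
  have hkk2 : k^2 - k < 0 := by
    by_contra hge
    push_neg at hge
    nlinarith [mul_nonneg hge hN.le]
  constructor <;> nlinarith [hkk2]

lemma segs_meet {t1 t2 t3 t4 : ℝ} (h1 : -π < t1) (h12 : t1 < t2) (h23 : t2 < t3)
    (h34 : t3 < t4) (h4 : t4 ≤ π)
    (p1 p2 p3 p4 : EuclideanSpace ℝ (Fin 2))
    (e1 : p1 0 = cos t1) (f1 : p1 1 = sin t1)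
    (e2 : p2 0 = cos t2) (f2 : p2 1 = sin t2)
    (e3 : p3 0 = cos t3) (f3 : p3 1 = sin t3)
    (e4 : p4 0 = cos t4) (f4 : p4 1 = sin t4) :
    (openSegment ℝ p1 p3 ∩ openSegment ℝ p2 p4).Nonempty := by
  have pi_pos := Real.pi_pos
  have py : ∀ t : ℝ, sin t ^ 2 + cos t ^ 2 = 1 := Real.sin_sq_add_cos_sq
  set v0 : ℝ := cos t3 - cos t1 with hv0
  set v1 : ℝ := sin t3 - sin t1 with hv1
  set F2 : ℝ := v0 * (sin t2 - sin t1) - v1 * (cos t2 - cos t1) with hF2def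
  set F4 : ℝ := v0 * (sin t4 - sin t1) - v1 * (cos t4 - cos t1) with hF4def
  have hF2neg : F2 < 0 := by
    have key := sin_sum_pos (u := t2 - t1) (w := t3 - t2) (by linarith) (by linarith) (by linarith)
    have he : F2 = -(Real.sin (t2-t1) + Real.sin (t3-t2) - Real.sin ((t2-t1)+(t3-t2))) := by
      rw [Real.sin_sub, Real.sin_sub, show (t2-t1)+(t3-t2) = t3-t1 by ring, Real.sin_sub]
      simp only [hF2def, hv0, hv1]; ring
    rw [he]; linarith
  have hF4pos : 0 < F4 := by
    have key := sin_sum_pos (u := t3 - t1) (w := t4 - t3) (by linarith) (by linarith) (by linarith)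
    have he : F4 = Real.sin (t3-t1) + Real.sin (t4-t3) - Real.sin ((t3-t1)+(t4-t3)) := by
      rw [Real.sin_sub, Real.sin_sub, show (t3-t1)+(t4-t3) = t4-t1 by ring, Real.sin_sub]
      simp only [hF4def, hv0, hv1]; ring
    rw [he]; linarith
  set s : ℝ := F4 / (F4 - F2) with hsdef
  have hden : 0 < F4 - F2 := by linarith
  have hs0 : 0 < s := div_pos hF4pos hden
  have hs1 : s < 1 := (div_lt_one hden).2 (by linarith)
  set q : EuclideanSpace ℝ (Fin 2) := s • p2 + (1 - s) • p4 with hqdef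
  have hq0 : q 0 = s * cos t2 + (1-s) * cos t4 := by
    simp [hqdef, PiLp.add_apply, PiLp.smul_apply, smul_eq_mul, e2, e4]
  have hq1 : q 1 = s * sin t2 + (1-s) * sin t4 := by
    simp [hqdef, PiLp.add_apply, PiLp.smul_apply, smul_eq_mul, f2, f4]
  have hqmem24 : q ∈ openSegment ℝ p2 p4 :=
    ⟨s, 1 - s, hs0, by linarith, by ring, rfl⟩
  -- q is on the line through p1 p3
  have hcross : v0 * (q 1 - sin t1) - v1 * (q 0 - cos t1) = 0 := by
    have hzero : s * F2 + (1-s) * F4 = 0 := by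
      rw [hsdef]; field_simp; ring
    rw [hq0, hq1]
    calc v0 * ((s * sin t2 + (1-s) * sin t4) - sin t1)
          - v1 * ((s * cos t2 + (1-s) * cos t4) - cos t1)
        = s * F2 + (1-s) * F4 := by simp only [hF2def, hF4def]; ring
      _ = 0 := hzero
  -- q is strictly inside the disk
  have hqin : q 0 ^ 2 + q 1 ^ 2 < 1 := by
    have hc : cos t2 * cos t4 + sin t2 * sin t4 = Real.cos (t4 - t2) := by
      rw [Real.cos_sub]; ring
    have hlt : Real.cos (t4 - t2) < 1 := cos_lt_one' (by linarith) (by linarith)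
    have hexp : q 0 ^ 2 + q 1 ^ 2
        = s^2 + (1-s)^2 + 2*s*(1-s) * Real.cos (t4 - t2) := by
      rw [hq0, hq1, ← hc]
      linear_combination (s^2) * py t2 + ((1-s)^2) * py t4
    rw [hexp]
    exact aux_q hs0 hs1 hlt
  have hnv : 0 < v0^2 + v1^2 := by
    have hc' : cos t1 * cos t3 + sin t1 * sin t3 = Real.cos (t3 - t1) := by
      rw [Real.cos_sub]; ring
    have hc : v0^2 + v1^2 = 2 - 2 * Real.cos (t3 - t1) := by
      simp only [hv0, hv1]
      linear_combination py t1 + py t3 - 2 * hc'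
    have hlt : Real.cos (t3 - t1) < 1 := cos_lt_one' (by linarith) (by linarith)
    rw [hc]; linarith
  set k : ℝ := (v0 * (q 0 - cos t1) + v1 * (q 1 - sin t1)) / (v0^2 + v1^2) with hkdef
  have hk0 : q 0 - cos t1 = k * v0 := by
    rw [hkdef]; field_simp; linear_combination (-v1) * hcross
  have hk1 : q 1 - sin t1 = k * v1 := by
    rw [hkdef]; field_simp; linear_combination v0 * hcross
  have hip : 2*(cos t1 * v0 + sin t1 * v1) + (v0^2+v1^2) = 0 := by
    simp only [hv0, hv1]
    linear_combination py t3 - py t1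
  have hqn : q 0 ^2 + q 1 ^2 = 1 + (k^2 - k) * (v0^2+v1^2) := by
    have hq0' : q 0 = cos t1 + k * v0 := by linarith
    have hq1' : q 1 = sin t1 + k * v1 := by linarith
    rw [hq0', hq1']
    linear_combination py t1 + k * hip
  have hkk : 0 < k ∧ k < 1 := aux_k hnv (by rw [← hqn]; exact hqin)
  refine ⟨q, ⟨1 - k, k, by linarith [hkk.2], hkk.1, by ring, ?_⟩, hqmem24⟩
  have hco0 : ((1-k) • p1 + k • p3) 0 = q 0 := by
    simp only [PiLp.add_apply, PiLp.smul_apply, smul_eq_mul, e1, e3]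
    have := hk0
    simp only [hv0] at this
    linear_combination -this
  have hco1 : ((1-k) • p1 + k • p3) 1 = q 1 := by
    simp only [PiLp.add_apply, PiLp.smul_apply, smul_eq_mul, f1, f3]
    have := hk1
    simp only [hv1] at this
    linear_combination -this
  ext i
  fin_cases i
  · exact hco0
  · exact hco1


lemma exists_low_deg {B : Type} (G : SimpleGraph B) (θ : B → ℝ)
    (hinj : Function.Injective θ)
    (hcr : ∀ a b c d : B, θ a < θ b → θ b < θ c → θ c < θ d →
      G.Adj a c → G.Adj b d → False)
    (S : Finset B) (hS : S.Nonempty) :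
    ∃ c ∈ S, ∀ d1 ∈ S, ∀ d2 ∈ S, G.Adj c d1 → G.Adj c d2 →
      ((θ d1 < θ c → θ d2 < θ c → d1 = d2) ∧ (θ c < θ d1 → θ c < θ d2 → d1 = d2)) := by
  classical
  set Int : B → B → Finset B := fun a b => S.filter (fun x => θ a < θ x ∧ θ x < θ b)
    with hIntdef
  set P : Finset (B × B) := (S ×ˢ S).filter
      (fun p => G.Adj p.1 p.2 ∧ θ p.1 < θ p.2 ∧ (Int p.1 p.2).Nonempty) with hPdef
  rcases P.eq_empty_or_nonempty with hPe | hPne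
  · -- every edge within S has empty interior
    have key : ∀ x y z : B, x ∈ S → y ∈ S → z ∈ S → G.Adj x y →
        θ x < θ z → θ z < θ y → False := by
      intro x y z hx hy hz hxy h1 h2
      have hmem : (x, y) ∈ P := by
        rw [hPdef]
        refine Finset.mem_filter.2 ⟨Finset.mem_product.2 ⟨hx, hy⟩, hxy, lt_trans h1 h2, ?_⟩
        exact ⟨z, Finset.mem_filter.2 ⟨hz, h1, h2⟩⟩
      rw [hPe] at hmem
      exact absurd hmem (Finset.notMem_empty _)
    obtain ⟨c, hc⟩ := hS
    refine ⟨c, hc, ?_⟩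
    intro d1 hd1 d2 hd2 ha1 ha2
    constructor
    · intro h1 h2
      by_contra hne
      rcases lt_trichotomy (θ d1) (θ d2) with h | h | h
      · exact key d1 c d2 hd1 hc hd2 ha1.symm h h2
      · exact hne (hinj h)
      · exact key d2 c d1 hd2 hc hd1 ha2.symm h h1
    · intro h1 h2
      by_contra hne
      rcases lt_trichotomy (θ d1) (θ d2) with h | h | h
      · exact key c d2 d1 hc hd2 hd1 ha2 h1 h
      · exact hne (hinj h)
      · exact key c d1 d2 hc hd1 hd2 ha1 h2 h
  · -- pick an edge with minimal nonempty interior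
    obtain ⟨p, hpP, hpmin⟩ := P.exists_min_image (fun p => (Int p.1 p.2).card) hPne
    obtain ⟨hpS, hadj, hθp, hInne⟩ := Finset.mem_filter.1 (hPdef ▸ hpP)
    set a := p.1 with ha
    set b := p.2 with hb
    have haS : a ∈ S := (Finset.mem_product.1 hpS).1
    have hbS : b ∈ S := (Finset.mem_product.1 hpS).2
    obtain ⟨c, hcI, hcmin⟩ := (Int a b).exists_min_image θ hInne
    obtain ⟨hcS, hac, hcb⟩ := Finset.mem_filter.1 hcI
    -- any neighbour of c below is a
    have below : ∀ d ∈ S, G.Adj c d → θ d < θ c → d = a := by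
      intro d hd hcd hdc
      rcases lt_trichotomy (θ d) (θ a) with h | h | h
      · exact (hcr d a c b h hac hcb hcd.symm hadj).elim
      · exact hinj h
      · exfalso
        have hdI : d ∈ Int a b := Finset.mem_filter.2 ⟨hd, h, lt_trans hdc hcb⟩
        exact absurd (hcmin d hdI) (not_le.2 hdc)
    -- any neighbour of c above is at most b
    have upbd : ∀ d ∈ S, G.Adj c d → θ c < θ d → θ d ≤ θ b := by
      intro d hd hcd hcdθ
      by_contra hgt
      push_neg at hgt
      exact hcr a c b d hac hcb hgt hadj hcd
    have above : ∀ d1 ∈ S, ∀ d2 ∈ S, G.Adj c d1 → G.Adj c d2 →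
        θ c < θ d1 → θ c < θ d2 → d1 = d2 := by
      have main : ∀ d1 ∈ S, ∀ d2 ∈ S, G.Adj c d1 → G.Adj c d2 →
          θ c < θ d1 → θ d1 < θ d2 → False := by
        intro d1 hd1 d2 hd2 ha1 ha2 h1 h12
        have hd2b : θ d2 ≤ θ b := upbd d2 hd2 ha2 (lt_trans h1 h12)
        have hmem : (c, d2) ∈ P := by
          rw [hPdef]
          refine Finset.mem_filter.2 ⟨Finset.mem_product.2 ⟨hcS, hd2⟩, ha2,
            lt_trans h1 h12, ⟨d1, Finset.mem_filter.2 ⟨hd1, h1, h12⟩⟩⟩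
        have hsub : Int c d2 ⊆ (Int a b).erase c := by
          intro x hx
          obtain ⟨hxS, hcx, hxd2⟩ := Finset.mem_filter.1 hx
          refine Finset.mem_erase.2 ⟨?_, Finset.mem_filter.2
            ⟨hxS, lt_trans hac hcx, lt_of_lt_of_le hxd2 hd2b⟩⟩
          intro hxc
          rw [hxc] at hcx
          exact lt_irrefl _ hcx
        have hlt : (Int c d2).card < (Int a b).card := by
          calc (Int c d2).card ≤ ((Int a b).erase c).card := Finset.card_le_card hsub
            _ < (Int a b).card := Finset.card_erase_lt_of_mem hcI
        exact absurd (hpmin (c, d2) hmem) (not_le.2 hlt)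
      intro d1 hd1 d2 hd2 ha1 ha2 h1 h2
      by_contra hne
      rcases lt_trichotomy (θ d1) (θ d2) with h | h | h
      · exact main d1 hd1 d2 hd2 ha1 ha2 h1 h
      · exact hne (hinj h)
      · exact main d2 hd2 d1 hd1 ha2 ha1 h2 h
    refine ⟨c, hcS, ?_⟩
    intro d1 hd1 d2 hd2 ha1 ha2
    exact ⟨fun h1 h2 => (below d1 hd1 ha1 h1).trans (below d2 hd2 ha2 h2).symm,
      fun h1 h2 => above d1 hd1 d2 hd2 ha1 ha2 h1 h2⟩

lemma exists_coloring {B : Type} (G : SimpleGraph B) (θ : B → ℝ)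
    (hinj : Function.Injective θ)
    (hcr : ∀ a b c d : B, θ a < θ b → θ b < θ c → θ c < θ d →
      G.Adj a c → G.Adj b d → False)
    (S : Finset B) :
    ∃ f : B → Fin 3, ∀ u ∈ S, ∀ v ∈ S, G.Adj u v → f u ≠ f v := by
  classical
  induction S using Finset.strongInduction with
  | _ S ih =>
    rcases S.eq_empty_or_nonempty with rfl | hS
    · exact ⟨fun _ => 0, by simp⟩
    obtain ⟨c, hcS, hprop⟩ := exists_low_deg G θ hinj hcr S hS
    obtain ⟨f, hf⟩ := ih (S.erase c) (Finset.erase_ssubset hcS)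
    set T : Finset B := S.filter (fun d => G.Adj c d) with hTdef
    have hTcard : T.card ≤ 2 := by
      set Tb : Finset B := T.filter (fun d => θ d < θ c) with hTb
      set Ta : Finset B := T.filter (fun d => θ c < θ d) with hTa
      have hsub : T ⊆ Tb ∪ Ta := by
        intro d hd
        have hadj : G.Adj c d := (Finset.mem_filter.1 hd).2
        have hne : θ d ≠ θ c := fun h => hadj.ne' (hinj h)
        rcases lt_or_gt_of_ne hne with h | h
        · exact Finset.mem_union_left _ (Finset.mem_filter.2 ⟨hd, h⟩)
        · exact Finset.mem_union_right _ (Finset.mem_filter.2 ⟨hd, h⟩)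
      have hb1 : Tb.card ≤ 1 := by
        refine Finset.card_le_one.2 ?_
        intro d1 h1 d2 h2
        obtain ⟨hm1, hl1⟩ := Finset.mem_filter.1 h1
        obtain ⟨hm2, hl2⟩ := Finset.mem_filter.1 h2
        obtain ⟨hS1, hadj1⟩ := Finset.mem_filter.1 hm1
        obtain ⟨hS2, hadj2⟩ := Finset.mem_filter.1 hm2
        exact (hprop d1 hS1 d2 hS2 hadj1 hadj2).1 hl1 hl2
      have ha1 : Ta.card ≤ 1 := by
        refine Finset.card_le_one.2 ?_
        intro d1 h1 d2 h2
        obtain ⟨hm1, hl1⟩ := Finset.mem_filter.1 h1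
        obtain ⟨hm2, hl2⟩ := Finset.mem_filter.1 h2
        obtain ⟨hS1, hadj1⟩ := Finset.mem_filter.1 hm1
        obtain ⟨hS2, hadj2⟩ := Finset.mem_filter.1 hm2
        exact (hprop d1 hS1 d2 hS2 hadj1 hadj2).2 hl1 hl2
      calc T.card ≤ (Tb ∪ Ta).card := Finset.card_le_card hsub
        _ ≤ Tb.card + Ta.card := Finset.card_union_le _ _
        _ ≤ 2 := by omega
    have hex : ∃ col : Fin 3, col ∉ T.image f := by
      by_contra h
      push_neg at h
      have hsub : (Finset.univ : Finset (Fin 3)) ⊆ T.image f := fun x _ => h x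
      have h3 : (3:ℕ) ≤ (T.image f).card := by
        have := Finset.card_le_card hsub
        simpa using this
      have := Finset.card_image_le (s := T) (f := f)
      omega
    obtain ⟨col, hcol⟩ := hex
    refine ⟨Function.update f c col, ?_⟩
    intro u hu v hv hadj
    by_cases huc : u = c <;> by_cases hvc : v = c
    · subst huc; subst hvc; exact absurd hadj (G.loopless.irrefl _)
    · subst huc
      rw [Function.update_self, Function.update_of_ne hvc]
      intro h
      exact hcol (h ▸ Finset.mem_image_of_mem f
        (Finset.mem_filter.2 ⟨hv, hadj⟩))
    · subst hvc
      rw [Function.update_self, Function.update_of_ne huc]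
      intro h
      exact hcol (h.symm ▸ Finset.mem_image_of_mem f
        (Finset.mem_filter.2 ⟨hu, hadj.symm⟩))
    · rw [Function.update_of_ne huc, Function.update_of_ne hvc]
      exact hf u (Finset.mem_erase.2 ⟨huc, hu⟩) v (Finset.mem_erase.2 ⟨hvc, hv⟩) hadj

lemma outerplanar_theta {V : Type} (G : SimpleGraph V) (h : IsOuterplanar G) :
    ∃ θ : V → ℝ, Function.Injective θ ∧
      ∀ a b c d : V, θ a < θ b → θ b < θ c → θ c < θ d →
        G.Adj a c → G.Adj b d → False := by
  obtain ⟨pos, hposinj, hnorm, hdisj⟩ := h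
  set z : V → ℂ := fun v => ⟨pos v 0, pos v 1⟩ with hzdef
  have hsq : ∀ v, (pos v 0)^2 + (pos v 1)^2 = 1 := by
    intro v
    have hv := hnorm v
    rw [EuclideanSpace.norm_eq] at hv
    have : Real.sqrt ((pos v 0)^2 + (pos v 1)^2) = 1 := by
      rw [← hv]
      congr 1
      simp [Fin.sum_univ_two, sq_abs, Real.norm_eq_abs]
    nlinarith [Real.sq_sqrt (by positivity : (0:ℝ) ≤ (pos v 0)^2 + (pos v 1)^2), this]
  have habs : ∀ v, ‖z v‖ = 1 := by
    intro v
    rw [Complex.norm_def, Complex.normSq_mk]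
    rw [show pos v 0 * pos v 0 + pos v 1 * pos v 1 = (pos v 0)^2 + (pos v 1)^2 by ring,
      hsq v, Real.sqrt_one]
  have hz0 : ∀ v, z v ≠ 0 := by
    intro v hv
    have := habs v
    rw [hv] at this
    simp at this
  set θ : V → ℝ := fun v => (z v).arg with hθdef
  have hcos : ∀ v, pos v 0 = Real.cos (θ v) := by
    intro v
    rw [hθdef]
    rw [Complex.cos_arg (hz0 v), habs v]
    simp [hzdef]
  have hsin : ∀ v, pos v 1 = Real.sin (θ v) := by
    intro v
    rw [hθdef, Complex.sin_arg, habs v]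
    simp [hzdef]
  have hθinj : Function.Injective θ := by
    intro u v huv
    apply hposinj
    have h0 : pos u 0 = pos v 0 := by rw [hcos u, hcos v, huv]
    have h1 : pos u 1 = pos v 1 := by rw [hsin u, hsin v, huv]
    ext i
    fin_cases i
    · exact h0
    · exact h1
  refine ⟨θ, hθinj, ?_⟩
  intro a b c d h1 h2 h3 hac hbd
  have hne : ({a, c} : Set V) ≠ {b, d} := by
    intro heq
    have ha : a ∈ ({b, d} : Set V) := heq ▸ (by simp : a ∈ ({a, c} : Set V))
    rcases ha with rfl | rfl
    · exact lt_irrefl _ h1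
    · exact lt_irrefl _ (h1.trans (h2.trans h3))
  have hmeet := segs_meet (t1 := θ a) (t2 := θ b) (t3 := θ c) (t4 := θ d)
    (Complex.neg_pi_lt_arg _) h1 h2 h3 (Complex.arg_le_pi _)
    (pos a) (pos b) (pos c) (pos d)
    (hcos a) (hsin a) (hcos b) (hsin b) (hcos c) (hsin c) (hcos d) (hsin d)
  rw [hdisj a c b d hac hbd hne] at hmeet
  exact Set.not_nonempty_empty hmeet

lemma exists_indep_third {B : Type} [Fintype B] [DecidableEq B]
    (G : SimpleGraph B) (hG : IsOuterplanar G) (w : B → ℕ) :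
    ∃ J : Finset B, IsIndepSet G J ∧ ∑ b, w b ≤ 3 * ∑ b ∈ J, w b := by
  classical
  obtain ⟨θ, hinj, hcr⟩ := outerplanar_theta G hG
  obtain ⟨f, hf⟩ := exists_coloring G θ hinj hcr Finset.univ
  set C : Fin 3 → Finset B := fun i => Finset.univ.filter (fun b => f b = i) with hC
  have hsum : ∑ i : Fin 3, ∑ b ∈ C i, w b = ∑ b, w b := by
    rw [hC]
    exact Finset.sum_fiberwise Finset.univ f w
  obtain ⟨i, _, himax⟩ := Finset.exists_max_image (Finset.univ : Finset (Fin 3))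
    (fun i => ∑ b ∈ C i, w b) ⟨0, Finset.mem_univ 0⟩
  refine ⟨C i, ?_, ?_⟩
  · intro u hu v hv hadj
    have hu' := (Finset.mem_filter.1 hu).2
    have hv' := (Finset.mem_filter.1 hv).2
    exact hf u (Finset.mem_univ u) v (Finset.mem_univ v) hadj (hu'.trans hv'.symm)
  · calc ∑ b, w b = ∑ j : Fin 3, ∑ b ∈ C j, w b := hsum.symm
      _ ≤ ∑ _j : Fin 3, ∑ b ∈ C i, w b :=
        Finset.sum_le_sum (fun j _ => himax j (Finset.mem_univ j))
      _ = 3 * ∑ b ∈ C i, w b := by simp [Finset.sum_const, mul_comm]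


end ThirdApproxAux

/-- Two-stage heuristic for preserving external adjacencies between two
regions.  Let `GA`, `GB` be the (outerplanar) internal adjacency graphs on the two sides and
`E` the set of external adjacency edges.  Suppose `IA` is a maximum-weight independent set
in `GA`, the weight of a vertex being its degree in `E`, and `IB` is then an independent set
in `GB` maximizing the number of edges of `E` into `IA` that are preserved.  Then the number
of external adjacencies preserved by `(IA, IB)` is at least one third of the number
preserved by any feasible pair of independent sets: the procedure is a 1/3-approximation. -/
theorem two_stage_independent_set_third_approximation
    (GA : SimpleGraph A) (GB : SimpleGraph B)
    (hGA : IsOuterplanar GA) (hGB : IsOuterplanar GB)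
    (E : Finset (A × B)) (IA : Finset A) (IB : Finset B)
    (hIA : IsIndepSet GA IA)
    (hIAmax : ∀ J : Finset A, IsIndepSet GA J →
      (E.filter (fun e => e.1 ∈ J)).card ≤ (E.filter (fun e => e.1 ∈ IA)).card)
    (hIB : IsIndepSet GB IB)
    (hIBmax : ∀ J : Finset B, IsIndepSet GB J →
      preservedCount E IA J ≤ preservedCount E IA IB) :
    ∀ (JA : Finset A) (JB : Finset B), IsIndepSet GA JA → IsIndepSet GB JB →
      preservedCount E JA JB ≤ 3 * preservedCount E IA IB := by
  classical
  intro JA JB hJA hJB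
  set w : B → ℕ := fun b => (E.filter (fun e => e.1 ∈ IA ∧ e.2 = b)).card with hw
  -- step 1 : preservedCount E JA JB ≤ (E.filter (·.1 ∈ JA)).card
  have step1 : preservedCount E JA JB ≤ (E.filter (fun e => e.1 ∈ JA)).card := by
    apply Finset.card_le_card
    intro e he
    obtain ⟨heE, h1, _⟩ := Finset.mem_filter.1 he
    exact Finset.mem_filter.2 ⟨heE, h1⟩
  -- step 2 : ≤ (E.filter (·.1 ∈ IA)).card
  have step2 := hIAmax JA hJA
  -- step 3 : (E.filter (·.1 ∈ IA)).card = ∑ b, w b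
  have step3 : (E.filter (fun e => e.1 ∈ IA)).card = ∑ b, w b := by
    rw [Finset.card_eq_sum_card_fiberwise
      (f := Prod.snd) (t := Finset.univ) (fun e _ => Finset.mem_univ e.2)]
    apply Finset.sum_congr rfl
    intro b _
    rw [hw]
    congr 1
    rw [Finset.filter_filter]
  -- for any J : preservedCount E IA J = ∑ b ∈ J, w b
  have keyJ : ∀ J : Finset B, preservedCount E IA J = ∑ b ∈ J, w b := by
    intro J
    rw [preservedCount, Finset.card_eq_sum_card_fiberwise
      (f := Prod.snd) (t := J) (fun e he => (Finset.mem_filter.1 he).2.2)]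
    apply Finset.sum_congr rfl
    intro b hb
    rw [hw]
    congr 1
    rw [Finset.filter_filter]
    apply Finset.filter_congr
    intro e _
    constructor
    · rintro ⟨⟨h1, _⟩, h2⟩; exact ⟨h1, h2⟩
    · rintro ⟨h1, h2⟩; exact ⟨⟨h1, h2 ▸ hb⟩, h2⟩
  obtain ⟨J, hJind, hJw⟩ := exists_indep_third GB hGB w
  have step4 : ∑ b ∈ J, w b = preservedCount E IA J := (keyJ J).symm
  have step5 := hIBmax J hJind
  calc preservedCount E JA JB ≤ (E.filter (fun e => e.1 ∈ IA)).card := step1.trans step2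
    _ = ∑ b, w b := step3
    _ ≤ 3 * ∑ b ∈ J, w b := hJw
    _ = 3 * preservedCount E IA J := by rw [step4]
    _ ≤ 3 * preservedCount E IA IB := Nat.mul_le_mul_left 3 step5
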